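/- arXiv:2404.07232 — 3 statements merged into one kernel-verified Lean document; each statement's English description precedes it below -/
import Mathlib

section
/- Let W : ℝ³ × ℝ → ℝ^{3×3} be C² and v, V : ℝ³ × ℝ → ℝ³ be C². Define α_{ij} := − e_{jrk} ∂_r W_{ik} (so that the row-wise curl of W equals −α). If W satisfies the elastic-distortion evolution equation ∂_t W_{ij} + v_k ∂_k W_{ij} + W_{im} ∂_j v_m − e_{jmn} α_{im} V_n = 0 on ℝ³ × ℝ for all i, j, then α satisfies the Burgers-vector transport equation ∂_t α_{ij} + e_{jrk} ∂_r ( e_{kmn} α_{im} (v_n + V_n) ) = 0 on ℝ³ × ℝ for all i, j. -/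
open scoped BigOperators

/-- Levi-Civita symbol on `Fin 3`. -/
noncomputable def eps (i j k : Fin 3) : ℝ :=
  (((i : ℕ) : ℝ) - ((j : ℕ) : ℝ)) * (((j : ℕ) : ℝ) - ((k : ℕ) : ℝ)) *
    (((k : ℕ) : ℝ) - ((i : ℕ) : ℝ)) / 2

/-- Spatial partial derivative in the `r`-th coordinate direction for a field
on space-time `ℝ³ × ℝ`. -/
noncomputable def pdx (r : Fin 3) (f : (Fin 3 → ℝ) × ℝ → ℝ) (z : (Fin 3 → ℝ) × ℝ) : ℝ :=
  fderiv ℝ f z (Pi.single r 1, 0)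

/-- Time partial derivative for a field on space-time `ℝ³ × ℝ`. -/
noncomputable def pdt (f : (Fin 3 → ℝ) × ℝ → ℝ) (z : (Fin 3 → ℝ) × ℝ) : ℝ :=
  fderiv ℝ f z (0, 1)

section Helpers

variable {f g : (Fin 3 → ℝ) × ℝ → ℝ} {z : (Fin 3 → ℝ) × ℝ} {r s : Fin 3} {c : ℝ}

lemma pd_comm (hf : ContDiff ℝ 2 f) (z u w : (Fin 3 → ℝ) × ℝ) :
    fderiv ℝ (fun y => fderiv ℝ f y w) z u = fderiv ℝ (fun y => fderiv ℝ f y u) z w := by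
  have hc : DifferentiableAt ℝ (fderiv ℝ f) z :=
    ((hf.fderiv_right (m := 1) le_rfl).differentiable one_ne_zero).differentiableAt
  have h1 := fderiv_clm_apply hc (differentiableAt_const w)
  have h2 := fderiv_clm_apply hc (differentiableAt_const u)
  have hsym : IsSymmSndFDerivAt ℝ f z := hf.contDiffAt.isSymmSndFDerivAt (by simp [minSmoothness_of_isRCLikeNormedField])
  simp only [h1, h2, fderiv_fun_const, Pi.zero_apply, ContinuousLinearMap.comp_zero,
    zero_add, ContinuousLinearMap.add_apply, ContinuousLinearMap.flip_apply]
  exact hsym u w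

lemma pdx_pdx_comm (hf : ContDiff ℝ 2 f) : pdx r (pdx s f) z = pdx s (pdx r f) z :=
  pd_comm hf z (Pi.single r 1, 0) (Pi.single s 1, 0)

lemma pdt_pdx_comm (hf : ContDiff ℝ 2 f) : pdt (pdx r f) z = pdx r (pdt f) z :=
  pd_comm hf z (0, 1) (Pi.single r 1, 0)

lemma pdx_add (hf : DifferentiableAt ℝ f z) (hg : DifferentiableAt ℝ g z) :
    pdx r (fun y => f y + g y) z = pdx r f z + pdx r g z := by
  unfold pdx; rw [fderiv_fun_add hf hg]; rfl

lemma pdx_sub (hf : DifferentiableAt ℝ f z) (hg : DifferentiableAt ℝ g z) :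
    pdx r (fun y => f y - g y) z = pdx r f z - pdx r g z := by
  unfold pdx; rw [fderiv_fun_sub hf hg]; rfl

lemma pdx_neg : pdx r (fun y => -f y) z = -pdx r f z := by
  unfold pdx; rw [fderiv_fun_neg]; rfl

lemma pdx_mul (hf : DifferentiableAt ℝ f z) (hg : DifferentiableAt ℝ g z) :
    pdx r (fun y => f y * g y) z = f z * pdx r g z + g z * pdx r f z := by
  unfold pdx; rw [fderiv_fun_mul hf hg]; simp

lemma pdx_const_mul (hf : DifferentiableAt ℝ f z) :
    pdx r (fun y => c * f y) z = c * pdx r f z := by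
  unfold pdx; rw [fderiv_const_mul hf]; simp

lemma pdx_const : pdx r (fun _ => c) z = 0 := by
  unfold pdx; rw [fderiv_fun_const]; simp

lemma pdx_sum {F : Fin 3 → (Fin 3 → ℝ) × ℝ → ℝ} (h : ∀ m, DifferentiableAt ℝ (F m) z) :
    pdx r (fun y => ∑ m, F m y) z = ∑ m, pdx r (F m) z := by
  unfold pdx; rw [fderiv_fun_sum (fun m _ => h m)]; simp

lemma pdt_add (hf : DifferentiableAt ℝ f z) (hg : DifferentiableAt ℝ g z) :
    pdt (fun y => f y + g y) z = pdt f z + pdt g z := by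
  unfold pdt; rw [fderiv_fun_add hf hg]; rfl

lemma pdt_sub (hf : DifferentiableAt ℝ f z) (hg : DifferentiableAt ℝ g z) :
    pdt (fun y => f y - g y) z = pdt f z - pdt g z := by
  unfold pdt; rw [fderiv_fun_sub hf hg]; rfl

lemma pdt_neg : pdt (fun y => -f y) z = -pdt f z := by
  unfold pdt; rw [fderiv_fun_neg]; rfl

lemma pdt_mul (hf : DifferentiableAt ℝ f z) (hg : DifferentiableAt ℝ g z) :
    pdt (fun y => f y * g y) z = f z * pdt g z + g z * pdt f z := by
  unfold pdt; rw [fderiv_fun_mul hf hg]; simp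

lemma pdt_const_mul (hf : DifferentiableAt ℝ f z) :
    pdt (fun y => c * f y) z = c * pdt f z := by
  unfold pdt; rw [fderiv_const_mul hf]; simp

lemma pdt_const : pdt (fun _ => c) z = 0 := by
  unfold pdt; rw [fderiv_fun_const]; simp

lemma pdt_sum {F : Fin 3 → (Fin 3 → ℝ) × ℝ → ℝ} (h : ∀ m, DifferentiableAt ℝ (F m) z) :
    pdt (fun y => ∑ m, F m y) z = ∑ m, pdt (F m) z := by
  unfold pdt; rw [fderiv_fun_sum (fun m _ => h m)]; simp

end Helpers

set_option maxHeartbeats 2000000 in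
/-- If the inverse elastic distortion `W` evolves by
`∂ₜ W_{ij} + v_k ∂_k W_{ij} + W_{im} ∂_j v_m − (α × V)_{ij} = 0`, with
`α := − curl W` (row-wise), then `α` satisfies the Burgers-vector transport
equation `∂ₜ α_{ij} + e_{jrk} ∂_r (e_{kmn} α_{im}(v_n + V_n)) = 0`. -/
theorem elastic_evolution_implies_transport
    (W : Fin 3 → Fin 3 → (Fin 3 → ℝ) × ℝ → ℝ)
    (v V : Fin 3 → (Fin 3 → ℝ) × ℝ → ℝ)
    (α : Fin 3 → Fin 3 → (Fin 3 → ℝ) × ℝ → ℝ)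
    (hW : ∀ i j, ContDiff ℝ 2 (W i j))
    (hv : ∀ i, ContDiff ℝ 2 (v i))
    (hV : ∀ i, ContDiff ℝ 2 (V i))
    (hαdef : ∀ i j z, α i j z = - ∑ r, ∑ k, eps j r k * pdx r (W i k) z)
    (hevol : ∀ i j z,
      pdt (W i j) z + (∑ k, v k z * pdx k (W i j) z) + (∑ m, W i m z * pdx j (v m) z)
        - ∑ m, ∑ n, eps j m n * α i m z * V n z = 0) :
    ∀ i j z, pdt (α i j) z +
      ∑ r, ∑ k, eps j r k *
        pdx r (fun w => ∑ m, ∑ n, eps k m n * α i m w * (v n w + V n w)) z = 0 := by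
  intro i j z
  have hWd : ∀ k, Differentiable ℝ (W i k) := fun k => (hW i k).differentiable two_ne_zero
  have hvd : ∀ n, Differentiable ℝ (v n) := fun n => (hv n).differentiable two_ne_zero
  have hVd : ∀ n, Differentiable ℝ (V n) := fun n => (hV n).differentiable two_ne_zero
  have hDWd : ∀ r k, Differentiable ℝ (pdx r (W i k)) := fun r k =>
    (((hW i k).fderiv_right (m := 1) le_rfl).clm_apply contDiff_const).differentiable one_ne_zero
  have hDvd : ∀ r n, Differentiable ℝ (pdx r (v n)) := fun r n =>
    (((hv n).fderiv_right (m := 1) le_rfl).clm_apply contDiff_const).differentiable one_ne_zero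
  have hαfun : ∀ m, α i m = fun w => -∑ r, ∑ k, eps m r k * pdx r (W i k) w :=
    fun m => funext fun w => hαdef i m w
  have hcm : ∀ r k, pdt (pdx r (W i k)) z = pdx r (pdt (W i k)) z :=
    fun r k => pdt_pdx_comm (hW i k)
  have hsW1 : ∀ p, pdx 1 (pdx 0 (W i p)) z = pdx 0 (pdx 1 (W i p)) z :=
    fun p => pdx_pdx_comm (hW i p)
  have hsW2 : ∀ p, pdx 2 (pdx 0 (W i p)) z = pdx 0 (pdx 2 (W i p)) z :=
    fun p => pdx_pdx_comm (hW i p)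
  have hsW3 : ∀ p, pdx 2 (pdx 1 (W i p)) z = pdx 1 (pdx 2 (W i p)) z :=
    fun p => pdx_pdx_comm (hW i p)
  have hsv1 : ∀ p, pdx 1 (pdx 0 (v p)) z = pdx 0 (pdx 1 (v p)) z :=
    fun p => pdx_pdx_comm (hv p)
  have hsv2 : ∀ p, pdx 2 (pdx 0 (v p)) z = pdx 0 (pdx 2 (v p)) z :=
    fun p => pdx_pdx_comm (hv p)
  have hsv3 : ∀ p, pdx 2 (pdx 1 (v p)) z = pdx 1 (pdx 2 (v p)) z :=
    fun p => pdx_pdx_comm (hv p)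
  have hpdtW : ∀ k, pdt (W i k) = fun w =>
      (∑ m, ∑ n, eps k m n * (-∑ s, ∑ p, eps m s p * pdx s (W i p) w) * V n w)
      - (∑ m, v m w * pdx m (W i k) w) - (∑ m, W i m w * pdx k (v m) w) := by
    intro k; funext w
    have h := hevol i k w
    simp only [hαdef i] at h
    linarith [h]
  simp only [hαfun]
  simp (disch := fun_prop) only [pdx_add, pdx_sub, pdx_neg, pdx_mul, pdx_const_mul, pdx_sum,
    pdt_add, pdt_sub, pdt_neg, pdt_mul, pdt_const_mul, pdt_sum, hcm]
  simp only [hpdtW]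
  simp (disch := fun_prop) only [pdx_add, pdx_sub, pdx_neg, pdx_mul, pdx_const_mul, pdx_sum]
  fin_cases j <;>
  · simp only [Fin.sum_univ_three]
    norm_num [eps, Fin.val_zero, Fin.val_one, Fin.val_two]
    simp only [pdx_const, pdt_const, mul_zero, zero_mul, add_zero, zero_add, neg_zero, sub_zero]
    simp only [hsW1, hsW2, hsW3, hsv1, hsv2, hsv3]
    ring
end

section
/- Let α : ℝ³ → ℝ^{3×3} be a C¹ matrix field that is 1-periodic in each coordinate, and let χ, χ' : ℝ³ → ℝ^{3×3} be C¹ matrix fields, 1-periodic in each coordinate, satisfying the row-wise curl conditions e_{jrk} ∂_r χ_{ik} = α_{ij} and e_{jrk} ∂_r χ'_{ik} = α_{ij} for all i, j. Then the helicity integral is gauge-independent: ∫_{[0,1]³} χ_{ij} α_{ij} dx = ∫_{[0,1]³} χ'_{ij} α_{ij} dx (summation over i, j). -/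
open scoped BigOperators
open MeasureTheory

/-- Partial derivative in the `r`-th coordinate direction on `ℝ³`. -/
noncomputable def pd (r : Fin 3) (f : (Fin 3 → ℝ) → ℝ) (x : Fin 3 → ℝ) : ℝ :=
  fderiv ℝ f x (Pi.single r 1)

@[simp] lemma eps_000 : eps (0:Fin 3) 0 0 = 0 := by norm_num [eps]
@[simp] lemma eps_001 : eps (0:Fin 3) 0 1 = 0 := by norm_num [eps]
@[simp] lemma eps_002 : eps (0:Fin 3) 0 2 = 0 := by norm_num [eps]
@[simp] lemma eps_010 : eps (0:Fin 3) 1 0 = 0 := by norm_num [eps]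
@[simp] lemma eps_011 : eps (0:Fin 3) 1 1 = 0 := by norm_num [eps]
@[simp] lemma eps_012 : eps (0:Fin 3) 1 2 = 1 := by norm_num [eps]
@[simp] lemma eps_020 : eps (0:Fin 3) 2 0 = 0 := by norm_num [eps]
@[simp] lemma eps_021 : eps (0:Fin 3) 2 1 = -1 := by norm_num [eps]
@[simp] lemma eps_022 : eps (0:Fin 3) 2 2 = 0 := by norm_num [eps]
@[simp] lemma eps_100 : eps (1:Fin 3) 0 0 = 0 := by norm_num [eps]
@[simp] lemma eps_101 : eps (1:Fin 3) 0 1 = 0 := by norm_num [eps]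
@[simp] lemma eps_102 : eps (1:Fin 3) 0 2 = -1 := by norm_num [eps]
@[simp] lemma eps_110 : eps (1:Fin 3) 1 0 = 0 := by norm_num [eps]
@[simp] lemma eps_111 : eps (1:Fin 3) 1 1 = 0 := by norm_num [eps]
@[simp] lemma eps_112 : eps (1:Fin 3) 1 2 = 0 := by norm_num [eps]
@[simp] lemma eps_120 : eps (1:Fin 3) 2 0 = 1 := by norm_num [eps]
@[simp] lemma eps_121 : eps (1:Fin 3) 2 1 = 0 := by norm_num [eps]
@[simp] lemma eps_122 : eps (1:Fin 3) 2 2 = 0 := by norm_num [eps]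
@[simp] lemma eps_200 : eps (2:Fin 3) 0 0 = 0 := by norm_num [eps]
@[simp] lemma eps_201 : eps (2:Fin 3) 0 1 = 1 := by norm_num [eps]
@[simp] lemma eps_202 : eps (2:Fin 3) 0 2 = 0 := by norm_num [eps]
@[simp] lemma eps_210 : eps (2:Fin 3) 1 0 = -1 := by norm_num [eps]
@[simp] lemma eps_211 : eps (2:Fin 3) 1 1 = 0 := by norm_num [eps]
@[simp] lemma eps_212 : eps (2:Fin 3) 1 2 = 0 := by norm_num [eps]
@[simp] lemma eps_220 : eps (2:Fin 3) 2 0 = 0 := by norm_num [eps]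
@[simp] lemma eps_221 : eps (2:Fin 3) 2 1 = 0 := by norm_num [eps]
@[simp] lemma eps_222 : eps (2:Fin 3) 2 2 = 0 := by norm_num [eps]

lemma insertNth_one_eq (r : Fin 3) (x : Fin 2 → ℝ) :
    (r.insertNth (1:ℝ) x : Fin 3 → ℝ) = (r.insertNth (0:ℝ) x : Fin 3 → ℝ) + Pi.single r 1 := by
  ext m
  refine Fin.succAboveCases r ?_ ?_ m
  · simp
  · intro j
    simp [Fin.succAbove_ne, Pi.single_eq_of_ne (Fin.succAbove_ne r j)]

lemma integral_pd_periodic (h : (Fin 3 → ℝ) → ℝ) (hC : ContDiff ℝ 1 h) (r : Fin 3)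
    (hper : ∀ x, h (x + Pi.single r 1) = h x) :
    ∫ x in Set.Icc (0 : Fin 3 → ℝ) 1, pd r h x = 0 := by
  have hd : Differentiable ℝ h := hC.differentiable one_ne_zero
  have key := MeasureTheory.integral_divergence_of_hasFDerivAt_off_countable'
    (a := (0 : Fin 3 → ℝ)) (b := 1) (by intro i; norm_num)
    (f := fun i x => if i = r then h x else 0)
    (f' := fun i x => if i = r then fderiv ℝ h x else 0)
    (s := ∅) Set.countable_empty
    (fun i => by
      by_cases hi : i = r <;> simp [hi]
      · exact (hC.continuous).continuousOn
      · exact continuousOn_const)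
    (fun x _ i => by
      by_cases hi : i = r <;> simp [hi]
      · exact (hd x).hasFDerivAt
      · exact hasFDerivAt_const 0 x)
    (by
      apply ContinuousOn.integrableOn_compact isCompact_Icc
      apply Continuous.continuousOn
      have : Continuous fun x => fderiv ℝ h x := (hC.fderiv_right (m := 0) le_rfl).continuous
      continuity)
  have hiface : ∀ i : Fin 3, i ≠ r →
      ((∫ x in Set.Icc ((0:Fin 3 → ℝ) ∘ i.succAbove) ((1:Fin 3 → ℝ) ∘ i.succAbove),
        (if i = r then h (i.insertNth ((1:Fin 3 → ℝ) i) x) else 0)) -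
       ∫ x in Set.Icc ((0:Fin 3 → ℝ) ∘ i.succAbove) ((1:Fin 3 → ℝ) ∘ i.succAbove),
        (if i = r then h (i.insertNth ((0:Fin 3 → ℝ) i) x) else 0)) = 0 := by
    intro i hi
    simp [hi]
  have hL : ∀ x, (∑ i : Fin 3, (if i = r then fderiv ℝ h x else 0) (Pi.single i 1)) = pd r h x := by
    intro x
    rw [Finset.sum_eq_single r]
    · simp [pd]
    · intro i _ hi; simp [hi]
    · simp
  simp only [hL] at key
  rw [key]
  apply Finset.sum_eq_zero
  intro i _
  by_cases hi : i = r
  · subst hi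
    have hptw : ∀ x : Fin 2 → ℝ,
        h (i.insertNth ((1:Fin 3 → ℝ) i) x) = h (i.insertNth ((0:Fin 3 → ℝ) i) x) := by
      intro x
      have h1 : ((1:Fin 3 → ℝ) i) = (1:ℝ) := rfl
      have h0 : ((0:Fin 3 → ℝ) i) = (0:ℝ) := rfl
      rw [h1, h0, insertNth_one_eq, hper]
    simp only [if_pos rfl, hptw, sub_self]
  · simpa using hiface i hi

lemma pd_mul {f g : (Fin 3 → ℝ) → ℝ} {x : Fin 3 → ℝ} (hf : DifferentiableAt ℝ f x)
    (hg : DifferentiableAt ℝ g x) (r : Fin 3) :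
    pd r (fun y => f y * g y) x = pd r f x * g x + f x * pd r g x := by
  unfold pd
  rw [fderiv_fun_mul hf hg]
  simp
  ring

lemma pd_sub_mul {f g h : (Fin 3 → ℝ) → ℝ} {x : Fin 3 → ℝ} (hf : DifferentiableAt ℝ f x)
    (hg : DifferentiableAt ℝ g x) (hh : DifferentiableAt ℝ h x) (r : Fin 3) :
    pd r (fun y => (f y - g y) * h y) x
      = (pd r f x - pd r g x) * h x + (f x - g x) * pd r h x := by
  rw [pd_mul (f := fun y => f y - g y) (hf.sub hg) hh]
  unfold pd
  rw [fderiv_fun_sub hf hg]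
  simp

set_option maxRecDepth 8000 in
set_option maxHeartbeats 3200000 in
/-- Gauge independence of the dislocation helicity: if `χ` and `χ'` are two
1-periodic C¹ potentials with row-wise `curl χ = curl χ' = α`, then
`∫_{[0,1]³} χ : α dx = ∫_{[0,1]³} χ' : α dx`. -/
theorem helicity_gauge_independent
    (α χ χ' : Fin 3 → Fin 3 → (Fin 3 → ℝ) → ℝ)
    (hα : ∀ i j, ContDiff ℝ 1 (α i j))
    (hχ : ∀ i j, ContDiff ℝ 1 (χ i j))
    (hχ' : ∀ i j, ContDiff ℝ 1 (χ' i j))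
    (hper_α : ∀ i j (x : Fin 3 → ℝ) (r : Fin 3), α i j (x + Pi.single r 1) = α i j x)
    (hper_χ : ∀ i j (x : Fin 3 → ℝ) (r : Fin 3), χ i j (x + Pi.single r 1) = χ i j x)
    (hper_χ' : ∀ i j (x : Fin 3 → ℝ) (r : Fin 3), χ' i j (x + Pi.single r 1) = χ' i j x)
    (hcurl : ∀ i j x, ∑ r, ∑ k, eps j r k * pd r (χ i k) x = α i j x)
    (hcurl' : ∀ i j x, ∑ r, ∑ k, eps j r k * pd r (χ' i k) x = α i j x) :
    ∫ x in Set.Icc (0 : Fin 3 → ℝ) 1, ∑ i, ∑ j, χ i j x * α i j x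
      = ∫ x in Set.Icc (0 : Fin 3 → ℝ) 1, ∑ i, ∑ j, χ' i j x * α i j x := by
  classical
  set g : Fin 3 → Fin 3 → Fin 3 → (Fin 3 → ℝ) → ℝ :=
    fun i j k y => (χ i j y - χ' i j y) * χ i k y with hgdef
  have hgC : ∀ i j k, ContDiff ℝ 1 (g i j k) :=
    fun i j k => ((hχ i j).sub (hχ' i j)).mul (hχ i k)
  have hgper : ∀ i j k (x : Fin 3 → ℝ) (r : Fin 3), g i j k (x + Pi.single r 1) = g i j k x := by
    intro i j k x r
    simp only [hgdef, hper_χ, hper_χ']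
  have hpdc : ∀ i j k r, Continuous (pd r (g i j k)) := by
    intro i j k r
    exact (((hgC i j k).fderiv_right (m := 0) le_rfl).continuous).clm_apply continuous_const
  have hIint : ∀ (f : (Fin 3 → ℝ) → ℝ), Continuous f →
      IntegrableOn f (Set.Icc (0:Fin 3 → ℝ) 1) :=
    fun f hf => hf.continuousOn.integrableOn_compact isCompact_Icc
  have h1 : IntegrableOn (fun x => ∑ i, ∑ j, χ i j x * α i j x) (Set.Icc (0:Fin 3 → ℝ) 1) :=
    hIint _ (continuous_finset_sum _ fun i _ => continuous_finset_sum _ fun j _ =>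
      ((hχ i j).continuous.mul (hα i j).continuous))
  have h2 : IntegrableOn (fun x => ∑ i, ∑ j, χ' i j x * α i j x) (Set.Icc (0:Fin 3 → ℝ) 1) :=
    hIint _ (continuous_finset_sum _ fun i _ => continuous_finset_sum _ fun j _ =>
      ((hχ' i j).continuous.mul (hα i j).continuous))
  rw [← sub_eq_zero, ← integral_sub h1 h2]
  have ptw : ∀ x : Fin 3 → ℝ,
      (∑ i, ∑ j, χ i j x * α i j x) - (∑ i, ∑ j, χ' i j x * α i j x)
        = ∑ i, ∑ j, ∑ r, ∑ k, eps j r k * pd r (g i j k) x := by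
    intro x
    have hpd : ∀ i j k r, pd r (g i j k) x
        = (pd r (χ i j) x - pd r (χ' i j) x) * χ i k x
          + (χ i j x - χ' i j x) * pd r (χ i k) x :=
      fun i j k r => pd_sub_mul ((hχ i j).differentiable one_ne_zero x)
        ((hχ' i j).differentiable one_ne_zero x) ((hχ i k).differentiable one_ne_zero x) r
    have hc00 := hcurl 0 0 x
    have hd00 := hcurl' 0 0 x
    have hc01 := hcurl 0 1 x
    have hd01 := hcurl' 0 1 x
    have hc02 := hcurl 0 2 x
    have hd02 := hcurl' 0 2 x
    have hc10 := hcurl 1 0 x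
    have hd10 := hcurl' 1 0 x
    have hc11 := hcurl 1 1 x
    have hd11 := hcurl' 1 1 x
    have hc12 := hcurl 1 2 x
    have hd12 := hcurl' 1 2 x
    have hc20 := hcurl 2 0 x
    have hd20 := hcurl' 2 0 x
    have hc21 := hcurl 2 1 x
    have hd21 := hcurl' 2 1 x
    have hc22 := hcurl 2 2 x
    have hd22 := hcurl' 2 2 x
    simp only [Fin.sum_univ_three, eps_000, eps_001, eps_002, eps_010, eps_011, eps_012,
      eps_020, eps_021, eps_022, eps_100, eps_101, eps_102, eps_110, eps_111, eps_112,
      eps_120, eps_121, eps_122, eps_200, eps_201, eps_202, eps_210, eps_211, eps_212,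
      eps_220, eps_221, eps_222, zero_mul, one_mul, neg_mul, add_zero, zero_add] at hc00 hd00 hc01 hd01 hc02 hd02 hc10 hd10 hc11 hd11 hc12 hd12 hc20 hd20 hc21 hd21 hc22 hd22
    simp only [hpd, Fin.sum_univ_three, eps_000, eps_001, eps_002, eps_010, eps_011, eps_012,
      eps_020, eps_021, eps_022, eps_100, eps_101, eps_102, eps_110, eps_111, eps_112,
      eps_120, eps_121, eps_122, eps_200, eps_201, eps_202, eps_210, eps_211, eps_212,
      eps_220, eps_221, eps_222, zero_mul, one_mul, neg_mul, add_zero, zero_add]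
    linear_combination
      χ' 0 0 x * hc00 - χ 0 0 x * hd00 +
      χ' 0 1 x * hc01 - χ 0 1 x * hd01 +
      χ' 0 2 x * hc02 - χ 0 2 x * hd02 +
      χ' 1 0 x * hc10 - χ 1 0 x * hd10 +
      χ' 1 1 x * hc11 - χ 1 1 x * hd11 +
      χ' 1 2 x * hc12 - χ 1 2 x * hd12 +
      χ' 2 0 x * hc20 - χ 2 0 x * hd20 +
      χ' 2 1 x * hc21 - χ 2 1 x * hd21 +
      χ' 2 2 x * hc22 - χ 2 2 x * hd22
  calc (∫ x in Set.Icc (0:Fin 3 → ℝ) 1,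
        ((∑ i, ∑ j, χ i j x * α i j x) - ∑ i, ∑ j, χ' i j x * α i j x))
      = ∫ x in Set.Icc (0:Fin 3 → ℝ) 1, ∑ i, ∑ j, ∑ r, ∑ k, eps j r k * pd r (g i j k) x := by
        apply integral_congr_ae
        filter_upwards with x using ptw x
    _ = 0 := by
        rw [integral_finset_sum (f := fun i x => ∑ j, ∑ r, ∑ k, eps j r k * pd r (g i j k) x) _ (fun i _ => hIint _ (continuous_finset_sum _ fun j _ =>
          continuous_finset_sum _ fun r _ => continuous_finset_sum _ fun k _ =>
          continuous_const.mul (hpdc i j k r)))]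
        apply Finset.sum_eq_zero
        intro i _
        rw [integral_finset_sum (f := fun j x => ∑ r, ∑ k, eps j r k * pd r (g i j k) x) _ (fun j _ => hIint _ (continuous_finset_sum _ fun r _ =>
          continuous_finset_sum _ fun k _ => continuous_const.mul (hpdc i j k r)))]
        apply Finset.sum_eq_zero
        intro j _
        rw [integral_finset_sum (f := fun r x => ∑ k, eps j r k * pd r (g i j k) x) _ (fun r _ => hIint _ (continuous_finset_sum _ fun k _ =>
          continuous_const.mul (hpdc i j k r)))]
        apply Finset.sum_eq_zero
        intro r _
        rw [integral_finset_sum (f := fun k x => eps j r k * pd r (g i j k) x) _ (fun k _ => hIint _ (continuous_const.mul (hpdc i j k r)))]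
        apply Finset.sum_eq_zero
        intro k _
        rw [MeasureTheory.integral_const_mul, integral_pd_periodic (g i j k) (hgC i j k) r
          (fun x => hgper i j k x r), mul_zero]
end

section
/- Let v : ℝ³ × ℝ → ℝ³ and α, χ : ℝ³ × ℝ → ℝ^{3×3} be C² fields, 1-periodic in each spatial coordinate, satisfying for all i, j and all (x,t): (i) the potential condition e_{jrk} ∂_r χ_{ik} = α_{ij}, and (ii) the gauge evolution ∂_t χ_{ij} = − e_{jmn} α_{im} v_n. Then α satisfies the transport equation ∂_t α_{ij} + e_{jrk} ∂_r( e_{kmn} α_{im} v_n ) = 0, and the helicity is conserved: d/dt ∫_{[0,1]³} χ_{ij}(x,t) α_{ij}(x,t) dx = 0 for all t. -/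
open scoped BigOperators
open MeasureTheory

/-! ### Auxiliary lemmas -/

section helpers

variable {Z : Type*} [NormedAddCommGroup Z] [NormedSpace ℝ Z] {z : Z}

lemma fda_sum {ι : Type*} (s : Finset ι) (g : ι → Z → ℝ)
    (hg : ∀ i ∈ s, DifferentiableAt ℝ (g i) z) (b : Z) :
    fderiv ℝ (fun w => ∑ i ∈ s, g i w) z b = ∑ i ∈ s, fderiv ℝ (g i) z b := by
  rw [fderiv_fun_sum hg]; simp

lemma fda_const_mul {g : Z → ℝ} (hg : DifferentiableAt ℝ g z) (c : ℝ) (b : Z) :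
    fderiv ℝ (fun w => c * g w) z b = c * fderiv ℝ g z b := by
  rw [fderiv_const_mul hg]; simp

lemma fda_mul {g h : Z → ℝ} (hg : DifferentiableAt ℝ g z)
    (hh : DifferentiableAt ℝ h z) (b : Z) :
    fderiv ℝ (fun w => g w * h w) z b = fderiv ℝ g z b * h z + g z * fderiv ℝ h z b := by
  rw [fderiv_fun_mul hg hh]; simp; ring

lemma fda_double_sum_mul (P Q : Fin 3 → Fin 3 → Z → ℝ)
    (hP : ∀ i j, DifferentiableAt ℝ (P i j) z)
    (hQ : ∀ i j, DifferentiableAt ℝ (Q i j) z) (b : Z) :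
    fderiv ℝ (fun w => ∑ i, ∑ j, P i j w * Q i j w) z b
      = ∑ i, ∑ j, (fderiv ℝ (P i j) z b * Q i j z + P i j z * fderiv ℝ (Q i j) z b) := by
  rw [fda_sum _ (fun i w => ∑ j, P i j w * Q i j w) (fun i _ => DifferentiableAt.fun_sum fun j _ => (hP i j).mul (hQ i j))]
  refine Finset.sum_congr rfl fun i _ => ?_
  rw [fda_sum _ (fun j w => P i j w * Q i j w) (fun j _ => (hP i j).mul (hQ i j))]
  exact Finset.sum_congr rfl fun j _ => fda_mul (hP i j) (hQ i j) b

lemma fda_triple_sum_mul (c : Fin 3 → Fin 3 → Fin 3 → ℝ) (P Q : Fin 3 → Fin 3 → Z → ℝ)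
    (hP : ∀ i j, DifferentiableAt ℝ (P i j) z)
    (hQ : ∀ i k, DifferentiableAt ℝ (Q i k) z) (b : Z) :
    fderiv ℝ (fun w => ∑ i, ∑ j, ∑ k, c i j k * (P i j w * Q i k w)) z b
      = ∑ i, ∑ j, ∑ k, c i j k *
          (fderiv ℝ (P i j) z b * Q i k z + P i j z * fderiv ℝ (Q i k) z b) := by
  rw [fda_sum _ (fun i w => ∑ j, ∑ k, c i j k * (P i j w * Q i k w)) (fun i _ => DifferentiableAt.fun_sum fun j _ => DifferentiableAt.fun_sum
    fun k _ => ((hP i j).mul (hQ i k)).const_mul _)]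
  refine Finset.sum_congr rfl fun i _ => ?_
  rw [fda_sum _ (fun j w => ∑ k, c i j k * (P i j w * Q i k w)) (fun j _ => DifferentiableAt.fun_sum fun k _ =>
    ((hP i j).mul (hQ i k)).const_mul _)]
  refine Finset.sum_congr rfl fun j _ => ?_
  rw [fda_sum _ (fun k w => c i j k * (P i j w * Q i k w)) (fun k _ => ((hP i j).mul (hQ i k)).const_mul _)]
  refine Finset.sum_congr rfl fun k _ => ?_
  rw [fda_const_mul (g := fun w => P i j w * Q i k w) ((hP i j).mul (hQ i k)) _ b, fda_mul (hP i j) (hQ i k) b]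

end helpers

lemma contDiff_pdx {f : (Fin 3 → ℝ) × ℝ → ℝ} (hf : ContDiff ℝ 2 f) (r : Fin 3) :
    ContDiff ℝ 1 (pdx r f) :=
  (hf.fderiv_right (by norm_num) : ContDiff ℝ 1 (fderiv ℝ f)).clm_apply contDiff_const

lemma contDiff_pdt {f : (Fin 3 → ℝ) × ℝ → ℝ} (hf : ContDiff ℝ 2 f) :
    ContDiff ℝ 1 (pdt f) :=
  (hf.fderiv_right (by norm_num) : ContDiff ℝ 1 (fderiv ℝ f)).clm_apply contDiff_const

lemma pdt_pdx {f : (Fin 3 → ℝ) × ℝ → ℝ} (hf : ContDiff ℝ 2 f) (r : Fin 3)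
    (z : (Fin 3 → ℝ) × ℝ) : pdt (pdx r f) z = pdx r (pdt f) z := by
  have hd : ∀ y, HasFDerivAt f (fderiv ℝ f y) y := fun y =>
    (hf.differentiable two_ne_zero y).hasFDerivAt
  have h1 : ContDiff ℝ 1 (fderiv ℝ f) := hf.fderiv_right (by norm_num)
  have hd2 : DifferentiableAt ℝ (fderiv ℝ f) z := (h1.differentiable one_ne_zero) z
  have hsymm := second_derivative_symmetric hd hd2.hasFDerivAt (Pi.single r 1, 0) (0, 1)
  have e1 : pdt (pdx r f) z = fderiv ℝ (fderiv ℝ f) z (0,1) (Pi.single r 1, 0) := by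
    unfold pdt pdx
    rw [fderiv_clm_apply hd2 (differentiableAt_const _)]
    simp
  have e2 : pdx r (pdt f) z = fderiv ℝ (fderiv ℝ f) z (Pi.single r 1, 0) (0,1) := by
    unfold pdt pdx
    rw [fderiv_clm_apply hd2 (differentiableAt_const _)]
    simp
  rw [e1, e2, hsymm]

/-- The key pointwise algebraic identity. -/
lemma eps_algebra (A C : Fin 3 → Fin 3 → ℝ) (V : Fin 3 → ℝ) (X B' : Fin 3 → Fin 3 → Fin 3 → ℝ)
    (hp : ∀ i j, ∑ r, ∑ k, eps j r k * X r i k = A i j) :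
    (∑ i, ∑ j, ((- ∑ m, ∑ n, eps j m n * A i m * V n) * A i j
      + C i j * (- ∑ r, ∑ k, eps j r k * B' r i k)))
    + ∑ r, ∑ i, ∑ j, ∑ k, eps j r k *
        (X r i j * (∑ m, ∑ n, eps k m n * A i m * V n) + C i j * B' r i k) = 0 := by
  simp only [← hp]
  simp only [Fin.sum_univ_three]
  norm_num [eps]
  ring

lemma insertNth_one_eq_s10 (i : Fin 3) (y : Fin 2 → ℝ) :
    (i.insertNth (1:ℝ) y : Fin 3 → ℝ) = (i.insertNth (0:ℝ) y : Fin 3 → ℝ) + Pi.single i 1 := by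
  funext j
  refine Fin.succAboveCases i ?_ ?_ j
  · simp
  · intro k
    simp [Pi.single_eq_of_ne (Fin.succAbove_ne i k)]

/-- The integral of the spatial divergence of a `C¹` spatially periodic family
vanishes on the unit box. -/
lemma integral_div_zero (F : Fin 3 → (Fin 3 → ℝ) × ℝ → ℝ) (t : ℝ)
    (hF : ∀ r, ContDiff ℝ 1 (F r))
    (hper : ∀ r (x : Fin 3 → ℝ) (i : Fin 3), F r (x + Pi.single i 1, t) = F r (x, t)) :
    ∫ x in Set.Icc (0 : Fin 3 → ℝ) 1, ∑ r, pdx r (F r) (x, t) = 0 := by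
  classical
  set L : (Fin 3 → ℝ) →L[ℝ] (Fin 3 → ℝ) × ℝ :=
    (ContinuousLinearMap.id ℝ (Fin 3 → ℝ)).prod 0 with hL
  have key := MeasureTheory.integral_divergence_of_hasFDerivAt_off_countable'
    (0 : Fin 3 → ℝ) 1 (by intro i; norm_num)
    (fun r x => F r (x, t))
    (fun r x => (fderiv ℝ (F r) (x, t)).comp L) ∅ Set.countable_empty
    (fun r => ((hF r).continuous.comp (by fun_prop)).continuousOn)
    (fun x _ r => by
      have h1 : HasFDerivAt (fun y : Fin 3 → ℝ => (y, t)) L x :=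
        (hasFDerivAt_id x).prodMk (hasFDerivAt_const t x)
      exact (((hF r).differentiable one_ne_zero).differentiableAt.hasFDerivAt).comp x h1)
    (by
      apply (ContinuousOn.integrableOn_compact isCompact_Icc)
      apply Continuous.continuousOn
      apply continuous_finset_sum
      intro r _
      have h1 : Continuous (fderiv ℝ (F r)) := (hF r).continuous_fderiv one_ne_zero
      have h2 : Continuous fun x : Fin 3 → ℝ =>
          fderiv ℝ (F r) (x, t) ((Pi.single r 1 : Fin 3 → ℝ), (0:ℝ)) :=
        ((h1.comp (by fun_prop : Continuous
          (fun x : Fin 3 → ℝ => ((x, t) : (Fin 3 → ℝ) × ℝ)))).clm_apply continuous_const)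
      exact h2)
  rw [show (fun x : Fin 3 → ℝ => ∑ r, pdx r (F r) (x,t))
      = (fun x => ∑ r, ((fderiv ℝ (F r) (x, t)).comp L) (Pi.single r 1)) from rfl]
  rw [key]
  apply Finset.sum_eq_zero
  intro r _
  have h2 : ∀ y : Fin 2 → ℝ, F r (r.insertNth ((1 : Fin 3 → ℝ) r) y, t)
      = F r (r.insertNth ((0 : Fin 3 → ℝ) r) y, t) := by
    intro y
    show F r (r.insertNth (1:ℝ) y, t) = F r (r.insertNth (0:ℝ) y, t)
    rw [insertNth_one_eq_s10, hper]
  simp only [h2, sub_self]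

lemma hasDerivAt_slice {g : (Fin 3 → ℝ) × ℝ → ℝ} (hg : Differentiable ℝ g)
    (x : Fin 3 → ℝ) (s : ℝ) : HasDerivAt (fun s => g (x, s)) (pdt g (x, s)) s := by
  have h1 : HasDerivAt (fun s : ℝ => ((x, s) : (Fin 3 → ℝ) × ℝ)) (0, 1) s :=
    (hasDerivAt_const s x).prodMk (hasDerivAt_id s)
  exact (hg (x, s)).hasFDerivAt.comp_hasDerivAt s h1

/-- Differentiation under the integral sign over the unit box. -/
lemma hasDerivAt_int (g : (Fin 3 → ℝ) × ℝ → ℝ) (hg : ContDiff ℝ 2 g) (t : ℝ) :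
    HasDerivAt (fun s => ∫ x in Set.Icc (0 : Fin 3 → ℝ) 1, g (x, s))
      (∫ x in Set.Icc (0 : Fin 3 → ℝ) 1, pdt g (x, t)) t := by
  haveI : IsFiniteMeasure ((volume : Measure (Fin 3 → ℝ)).restrict (Set.Icc 0 1)) :=
    ⟨by rw [Measure.restrict_apply_univ]; exact isCompact_Icc.measure_lt_top⟩
  have hgc : Continuous g := hg.continuous
  have hgd : Differentiable ℝ g := hg.differentiable two_ne_zero
  have hpc : Continuous (pdt g) := (contDiff_pdt hg).continuous
  obtain ⟨C, hC⟩ := (IsCompact.exists_bound_of_continuousOn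
    ((isCompact_Icc : IsCompact (Set.Icc (0 : Fin 3 → ℝ) 1)).prod
      (isCompact_Icc : IsCompact (Set.Icc (t-1) (t+1)))) hpc.continuousOn)
  have key := hasDerivAt_integral_of_dominated_loc_of_deriv_le
    (μ := (volume : Measure (Fin 3 → ℝ)).restrict (Set.Icc 0 1))
    (F := fun s x => g (x, s)) (F' := fun s x => pdt g (x, s)) (x₀ := t)
    (bound := fun _ => C) (s := Metric.ball t 1) (Metric.ball_mem_nhds t one_pos)
    (Filter.Eventually.of_forall fun s =>
      ((hgc.comp (by fun_prop)).aestronglyMeasurable))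
    (ContinuousOn.integrableOn_compact isCompact_Icc ((hgc.comp (by fun_prop)).continuousOn))
    ((hpc.comp (by fun_prop : Continuous fun x : Fin 3 → ℝ =>
      ((x, t) : (Fin 3 → ℝ) × ℝ))).aestronglyMeasurable)
    (by
      refine ((ae_restrict_mem measurableSet_Icc).mono ?_)
      intro x hx s hs
      refine hC ((x, s)) ⟨hx, ?_⟩
      rw [Metric.mem_ball, Real.dist_eq] at hs
      constructor <;> [linarith [abs_lt.1 hs]; linarith [(abs_lt.1 hs).2]])
    (integrable_const C)
    (Filter.Eventually.of_forall fun x _ _ => hasDerivAt_slice hgd x _)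
  exact key.2

/-- If `curl χ = α` (row-wise) and the gauge evolves by `∂ₜ χ = −α × v`, then
`α` satisfies the transport equation `∂ₜ α + curl(α × v) = 0` and the helicity
`∫_{[0,1]³} χ : α dx` is conserved in time. -/
theorem helicity_conservation
    (v : Fin 3 → (Fin 3 → ℝ) × ℝ → ℝ)
    (α χ : Fin 3 → Fin 3 → (Fin 3 → ℝ) × ℝ → ℝ)
    (hv : ∀ i, ContDiff ℝ 2 (v i))
    (hα : ∀ i j, ContDiff ℝ 2 (α i j))
    (hχ : ∀ i j, ContDiff ℝ 2 (χ i j))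
    (hper_v : ∀ i (x : Fin 3 → ℝ) (t : ℝ) (r : Fin 3),
      v i (x + Pi.single r 1, t) = v i (x, t))
    (hper_α : ∀ i j (x : Fin 3 → ℝ) (t : ℝ) (r : Fin 3),
      α i j (x + Pi.single r 1, t) = α i j (x, t))
    (hper_χ : ∀ i j (x : Fin 3 → ℝ) (t : ℝ) (r : Fin 3),
      χ i j (x + Pi.single r 1, t) = χ i j (x, t))
    (hpot : ∀ i j z, ∑ r, ∑ k, eps j r k * pdx r (χ i k) z = α i j z)
    (hgauge : ∀ i j z, pdt (χ i j) z = - ∑ m, ∑ n, eps j m n * α i m z * v n z) :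
    (∀ i j z, pdt (α i j) z +
      ∑ r, ∑ k, eps j r k *
        pdx r (fun w => ∑ m, ∑ n, eps k m n * α i m w * v n w) z = 0) ∧
    (∀ t : ℝ, deriv (fun s =>
      ∫ x in Set.Icc (0 : Fin 3 → ℝ) 1, ∑ i, ∑ j, χ i j (x, s) * α i j (x, s)) t = 0) := by
  have dα : ∀ i j, Differentiable ℝ (α i j) := fun i j => (hα i j).differentiable two_ne_zero
  have dχ : ∀ i j, Differentiable ℝ (χ i j) := fun i j => (hχ i j).differentiable two_ne_zero
  have dv : ∀ n, Differentiable ℝ (v n) := fun n => (hv n).differentiable two_ne_zero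
  -- β i k is C²
  have cβ : ∀ i k, ContDiff ℝ 2 (fun w => ∑ m, ∑ n, eps k m n * α i m w * v n w) :=
    fun i k => ContDiff.sum fun m _ => ContDiff.sum fun n _ =>
      (contDiff_const.mul (hα i m)).mul (hv n)
  have dβ : ∀ i k (z : (Fin 3 → ℝ) × ℝ),
      DifferentiableAt ℝ (fun w => ∑ m, ∑ n, eps k m n * α i m w * v n w) z :=
    fun i k z => ((cβ i k).differentiable two_ne_zero) z
  -- Part 1
  have part1 : ∀ i j z, pdt (α i j) z +
      ∑ r, ∑ k, eps j r k *
        pdx r (fun w => ∑ m, ∑ n, eps k m n * α i m w * v n w) z = 0 := by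
    intro i j z
    have hdχ' : ∀ r k, DifferentiableAt ℝ (pdx r (χ i k)) z := fun r k =>
      ((contDiff_pdx (hχ i k) r).differentiable one_ne_zero) z
    have hαe : α i j = fun w => ∑ r, ∑ k, eps j r k * pdx r (χ i k) w :=
      funext fun w => (hpot i j w).symm
    have step1 : pdt (α i j) z = ∑ r, ∑ k, eps j r k * pdt (pdx r (χ i k)) z := by
      rw [hαe]
      unfold pdt
      rw [fda_sum _ _ (fun r _ => DifferentiableAt.fun_sum fun k _ => (hdχ' r k).const_mul _)]
      refine Finset.sum_congr rfl fun r _ => ?_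
      rw [fda_sum _ _ (fun k _ => (hdχ' r k).const_mul _)]
      exact Finset.sum_congr rfl fun k _ => fda_const_mul (hdχ' r k) _ _
    have step2 : ∀ r k, pdt (pdx r (χ i k)) z =
        - pdx r (fun w => ∑ m, ∑ n, eps k m n * α i m w * v n w) z := by
      intro r k
      have hge : pdt (χ i k) = fun w => - ∑ m, ∑ n, eps k m n * α i m w * v n w :=
        funext fun w => hgauge i k w
      rw [pdt_pdx (hχ i k) r z, hge]
      unfold pdx
      rw [show (fun w => - ∑ m, ∑ n, eps k m n * α i m w * v n w)
          = (fun w => -(fun u => ∑ m, ∑ n, eps k m n * α i m u * v n u) w) from rfl,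
        fderiv_fun_neg]
      simp
    rw [step1]
    simp only [step2]
    rw [← Finset.sum_add_distrib]
    refine Finset.sum_eq_zero fun r _ => ?_
    rw [← Finset.sum_add_distrib]
    exact Finset.sum_eq_zero fun k _ => by ring
  refine ⟨part1, ?_⟩
  intro t
  -- consequence of part 1
  have hpa : ∀ i j z, pdt (α i j) z = - ∑ r, ∑ k, eps j r k *
      pdx r (fun w => ∑ m, ∑ n, eps k m n * α i m w * v n w) z :=
    fun i j z => by have := part1 i j z; linarith
  -- the divergence field
  set F : Fin 3 → (Fin 3 → ℝ) × ℝ → ℝ := fun r w =>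
    ∑ i, ∑ j, ∑ k, eps j r k * (χ i j w * ∑ m, ∑ n, eps k m n * α i m w * v n w) with hFdef
  have cF : ∀ r, ContDiff ℝ 1 (F r) := fun r =>
    (ContDiff.sum fun i _ => ContDiff.sum fun j _ => ContDiff.sum fun k _ =>
      (contDiff_const.mul ((hχ i j).mul (cβ i k)))).of_le one_le_two
  have hperF : ∀ r (x : Fin 3 → ℝ) (i : Fin 3), F r (x + Pi.single i 1, t) = F r (x, t) := by
    intro r x i
    simp only [hFdef, hper_χ, hper_α, hper_v]
  -- expansion of pdt g
  have e1 : ∀ z : (Fin 3 → ℝ) × ℝ,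
      pdt (fun w => ∑ i, ∑ j, χ i j w * α i j w) z
        = ∑ i, ∑ j, (pdt (χ i j) z * α i j z + χ i j z * pdt (α i j) z) :=
    fun z => fda_double_sum_mul χ α (fun i j => (dχ i j) z) (fun i j => (dα i j) z) (0,1)
  -- expansion of pdx r (F r)
  have e2 : ∀ r (z : (Fin 3 → ℝ) × ℝ), pdx r (F r) z
      = ∑ i, ∑ j, ∑ k, eps j r k *
          (pdx r (χ i j) z * (∑ m, ∑ n, eps k m n * α i m z * v n z)
            + χ i j z * pdx r (fun w => ∑ m, ∑ n, eps k m n * α i m w * v n w) z) :=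
    fun r z => fda_triple_sum_mul (fun i j k => eps j r k) χ
      (fun i k w => ∑ m, ∑ n, eps k m n * α i m w * v n w)
      (fun i j => (dχ i j) z) (fun i k => dβ i k z) (Pi.single r 1, 0)
  -- pointwise identity: ∂ₜ (χ:α) = - div F
  have hpt : ∀ z : (Fin 3 → ℝ) × ℝ,
      pdt (fun w => ∑ i, ∑ j, χ i j w * α i j w) z = - ∑ r, pdx r (F r) z := by
    intro z
    refine eq_neg_of_add_eq_zero_left ?_
    rw [e1 z]
    simp only [e2]
    simp only [hgauge, hpa]
    exact eps_algebra (fun i m => α i m z) (fun i j => χ i j z) (fun n => v n z)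
      (fun r i j => pdx r (χ i j) z)
      (fun r i k => pdx r (fun w => ∑ m, ∑ n, eps k m n * α i m w * v n w) z)
      (fun i j => hpot i j z)
  -- differentiate under the integral
  have cg : ContDiff ℝ 2 (fun w => ∑ i, ∑ j, χ i j w * α i j w) :=
    ContDiff.sum fun i _ => ContDiff.sum fun j _ => (hχ i j).mul (hα i j)
  have hd : HasDerivAt (fun s =>
      ∫ x in Set.Icc (0 : Fin 3 → ℝ) 1, ∑ i, ∑ j, χ i j (x, s) * α i j (x, s))
      (∫ x in Set.Icc (0 : Fin 3 → ℝ) 1,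
        pdt (fun w => ∑ i, ∑ j, χ i j w * α i j w) (x, t)) t :=
    hasDerivAt_int (fun w => ∑ i, ∑ j, χ i j w * α i j w) cg t
  rw [hd.deriv]
  have : (fun x : Fin 3 → ℝ =>
      pdt (fun w => ∑ i, ∑ j, χ i j w * α i j w) (x, t))
      = fun x => - ∑ r, pdx r (F r) (x, t) := funext fun x => hpt (x, t)
  rw [this, integral_neg, integral_div_zero F t cF hperF, neg_zero]
end
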